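/- Let d > 0 and r_max > 0. Let (r, θ) be a random pair where r has probability density 2·t/r_max² on [0, r_max], θ is uniformly distributed on [0, 2π], and r and θ are independent. For every α ≥ 0 with α − d ≤ r_max, the cumulative distribution function F(α) = P(d² + r² − 2·d·r·cos(θ) ≤ α²) is given by F(α) = ∫_{|α−d|}^{min(r_max, d+α)} (2·t/(π·r_max²)) · arccos((d² + t² − α²)/(2·d·t)) dt + (max(α − d, 0))²/r_max², where the integral is taken to be 0 when |α − d| > min(r_max, d + α). -/

import Mathlib

open MeasureTheory ProbabilityTheory

lemma volA (c : ℝ) :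
    MeasureTheory.volume (Set.Icc 0 (2*Real.pi) ∩ {x | c ≤ Real.cos x})
      = ENNReal.ofReal (2 * Real.arccos c) := by
  rcases le_or_gt c (-1) with hc | hc
  · have : Set.Icc 0 (2*Real.pi) ∩ {x | c ≤ Real.cos x} = Set.Icc 0 (2*Real.pi) := by
      apply Set.inter_eq_left.2
      intro x _; exact hc.trans (Real.neg_one_le_cos x)
    rw [this, Real.volume_Icc, Real.arccos_eq_pi.2 hc]
    ring_nf
  rcases lt_or_ge (1:ℝ) c with hc1 | hc1
  · have : Set.Icc 0 (2*Real.pi) ∩ {x | c ≤ Real.cos x} = ∅ := by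
      ext x; simp only [Set.mem_inter_iff, Set.mem_empty_iff_false, iff_false]
      rintro ⟨-, hx⟩
      exact absurd (hx.trans (Real.cos_le_one x)) (not_le.2 hc1)
    rw [this, Real.arccos_eq_zero.2 hc1.le]
    simp
  · set A := Real.arccos c with hA
    set π := Real.pi
    have hA0 : 0 ≤ A := Real.arccos_nonneg c
    have hAπ : A < π := by
      rcases lt_or_eq_of_le (Real.arccos_le_pi c) with h | h
      · exact h
      · exact absurd (Real.arccos_eq_pi.1 h) (not_le.2 hc)
    have hcosA : Real.cos A = c := Real.cos_arccos hc.le hc1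
    have hseteq : Set.Icc 0 (2*π) ∩ {x | c ≤ Real.cos x}
        = Set.Icc 0 A ∪ Set.Icc (2*π - A) (2*π) := by
      ext x
      simp only [Set.mem_inter_iff, Set.mem_union, Set.mem_Icc, Set.mem_setOf_eq]
      constructor
      · rintro ⟨⟨hx0, hx2⟩, hcx⟩
        rcases le_or_gt x π with hxπ | hxπ
        · left
          refine ⟨hx0, ?_⟩
          by_contra h
          push_neg at h
          have := Real.strictAntiOn_cos ⟨hA0, hAπ.le⟩ ⟨hx0, hxπ⟩ h
          rw [hcosA] at this
          exact absurd hcx (not_le.2 this)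
        · right
          refine ⟨?_, hx2⟩
          have hy0 : 0 ≤ 2*π - x := by linarith
          have hyπ : 2*π - x ≤ π := by linarith
          have hcy : Real.cos (2*π - x) = Real.cos x := Real.cos_two_pi_sub x
          by_contra h
          push_neg at h
          have hlt : A < 2*π - x := by linarith
          have := Real.strictAntiOn_cos ⟨hA0, hAπ.le⟩ ⟨hy0, hyπ⟩ hlt
          rw [hcosA, hcy] at this
          exact absurd hcx (not_le.2 this)
      · have hπ := Real.pi_pos
        rintro (⟨hx0, hxA⟩ | ⟨hx1, hx2⟩)
        · refine ⟨⟨hx0, by linarith⟩, ?_⟩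
          calc c = Real.cos A := hcosA.symm
          _ ≤ Real.cos x := Real.cos_le_cos_of_nonneg_of_le_pi hx0 hAπ.le hxA
        · refine ⟨⟨by linarith, hx2⟩, ?_⟩
          have hcy : Real.cos (2*π - x) = Real.cos x := Real.cos_two_pi_sub x
          rw [← hcy]
          calc c = Real.cos A := hcosA.symm
          _ ≤ Real.cos (2*π - x) :=
            Real.cos_le_cos_of_nonneg_of_le_pi (by linarith) hAπ.le (by linarith)
    rw [hseteq, measure_union _ measurableSet_Icc]
    · rw [Real.volume_Icc, Real.volume_Icc, ← ENNReal.ofReal_add (by linarith) (by linarith)]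
      ring_nf
    · apply Set.disjoint_left.2
      intro x hx hx2
      have h1 : x ≤ A := hx.2
      have h2 : 2*π - A ≤ x := hx2.1
      have hπ := Real.pi_pos
      linarith

/-- CDF of the user-to-relocated-UAV distance (Proposition 1): with `r` having density
`2t/r_max²` on `[0, r_max]`, `θ` uniform on `[0,2π]`, independent, the CDF of
`√(d² + r² − 2dr cos θ)` is the stated integral plus the atom term. -/
theorem stmt_6 {Ω : Type*} [MeasurableSpace Ω] (P : Measure Ω) [IsProbabilityMeasure P]
    (d rmax : ℝ) (hd : 0 < d) (hrmax : 0 < rmax)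
    (r θ : Ω → ℝ) (hrmeas : Measurable r) (hθmeas : Measurable θ)
    (hr : P.map r = volume.withDensity
      (fun t => if t ∈ Set.Icc (0:ℝ) rmax then ENNReal.ofReal (2 * t / rmax ^ 2) else 0))
    (hθ : P.map θ =
      ENNReal.ofReal (1 / (2 * Real.pi)) • volume.restrict (Set.Icc 0 (2 * Real.pi)))
    (hindep : IndepFun r θ P) :
    ∀ α : ℝ, 0 ≤ α → α - d ≤ rmax →
      (P {ω | d ^ 2 + (r ω) ^ 2 - 2 * d * (r ω) * Real.cos (θ ω) ≤ α ^ 2}).toReal =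
        (∫ t in Set.Ioc (|α - d|) (min rmax (d + α)),
            (2 * t / (Real.pi * rmax ^ 2)) *
              Real.arccos ((d ^ 2 + t ^ 2 - α ^ 2) / (2 * d * t)))
          + (max (α - d) 0) ^ 2 / rmax ^ 2 := by
  intro α hα hαd
  have hπ := Real.pi_pos
  set c : ℝ → ℝ := fun t => (d ^ 2 + t ^ 2 - α ^ 2) / (2 * d * t) with hcdef
  set S : Set (ℝ × ℝ) := {p | d ^ 2 + p.1 ^ 2 - 2 * d * p.1 * Real.cos p.2 ≤ α ^ 2} with hSdef
  have hS : MeasurableSet S := by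
    have hm : Measurable (fun p : ℝ × ℝ => d ^ 2 + p.1 ^ 2 - 2 * d * p.1 * Real.cos p.2) := by
      fun_prop
    exact measurableSet_le hm measurable_const
  set f : ℝ → ENNReal :=
    fun t => if t ∈ Set.Icc (0:ℝ) rmax then ENNReal.ofReal (2 * t / rmax ^ 2) else 0 with hfdef
  set μ : Measure ℝ := volume.withDensity f with hμdef
  set ν : Measure ℝ :=
    ENNReal.ofReal (1 / (2 * Real.pi)) • volume.restrict (Set.Icc 0 (2 * Real.pi)) with hνdef
  haveI : IsProbabilityMeasure μ := by
    rw [← hr]; exact Measure.isProbabilityMeasure_map hrmeas.aemeasurable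
  have hmap : P.map (fun ω => (r ω, θ ω)) = μ.prod ν := by
    rw [(ProbabilityTheory.indepFun_iff_map_prod_eq_prod_map_map hrmeas.aemeasurable
      hθmeas.aemeasurable).1 hindep, hr, hθ]
  have hPev : P {ω | d ^ 2 + (r ω) ^ 2 - 2 * d * (r ω) * Real.cos (θ ω) ≤ α ^ 2}
      = μ.prod ν S := by
    rw [← hmap, Measure.map_apply (hrmeas.prodMk hθmeas) hS]
    rfl
  have hslice : ∀ t : ℝ, 0 < t →
      ν (Prod.mk t ⁻¹' S) = ENNReal.ofReal (Real.arccos (c t) / Real.pi) := by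
    intro t ht
    have hpre : Prod.mk t ⁻¹' S = {x | c t ≤ Real.cos x} := by
      ext x
      simp only [Set.mem_preimage, hSdef, Set.mem_setOf_eq, hcdef]
      rw [div_le_iff₀ (by positivity)]
      constructor <;> intro hh <;> nlinarith
    have hms : MeasurableSet {x : ℝ | c t ≤ Real.cos x} :=
      measurableSet_le measurable_const Real.measurable_cos
    rw [hpre, hνdef, Measure.smul_apply, Measure.restrict_apply hms, smul_eq_mul,
      Set.inter_comm, volA (c t), ← ENNReal.ofReal_mul (by positivity)]
    congr 1
    field_simp
  set h : ℝ → ℝ := fun t => (2 * t / rmax ^ 2) * (Real.arccos (c t) / Real.pi) with hhdef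
  have hcm : Measurable c := by rw [hcdef]; fun_prop
  have harcm : Measurable (fun t => Real.arccos (c t)) :=
    Real.continuous_arccos.measurable.comp hcm
  have hhm : Measurable h := by
    rw [hhdef]
    exact Measurable.mul (by fun_prop) (harcm.div_const _)
  have hfm : Measurable f := Measurable.ite measurableSet_Icc (by fun_prop) measurable_const
  have hgm : Measurable (fun t => ν (Prod.mk t ⁻¹' S)) := measurable_measure_prodMk_left hS
  have h1 : μ.prod ν S = ∫⁻ t in Set.Icc 0 rmax, ENNReal.ofReal (h t) := by
    rw [Measure.prod_apply hS, hμdef, lintegral_withDensity_eq_lintegral_mul volume hfm hgm]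
    have hae : ∀ᵐ (t : ℝ) ∂volume, t ≠ 0 := by
      refine ae_iff.mpr ?_
      simp only [not_not, Set.setOf_eq_eq_singleton]
      exact measure_singleton 0
    have haeq : (fun t => (f * fun t => ν (Prod.mk t ⁻¹' S)) t) =ᵐ[volume]
        Set.indicator (Set.Icc 0 rmax) (fun t => ENNReal.ofReal (h t)) := by
      filter_upwards [hae] with t ht
      simp only [Pi.mul_apply]
      by_cases hmem : t ∈ Set.Icc (0:ℝ) rmax
      · have ht' : 0 < t := lt_of_le_of_ne hmem.1 (Ne.symm ht)
        rw [Set.indicator_of_mem hmem, hfdef]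
        simp only [if_pos hmem]
        rw [hslice t ht', hhdef, ← ENNReal.ofReal_mul (by positivity)]
      · have hf0 : f t = 0 := by rw [hfdef]; simp [hmem]
        rw [Set.indicator_of_notMem hmem, hf0, zero_mul]
    rw [lintegral_congr_ae haeq, lintegral_indicator measurableSet_Icc _]
  have h2 : ∫ t in Set.Icc 0 rmax, h t
      = (∫⁻ t in Set.Icc 0 rmax, ENNReal.ofReal (h t)).toReal := by
    apply integral_eq_lintegral_of_nonneg_ae
    · refine (ae_restrict_iff' measurableSet_Icc).2 (Filter.Eventually.of_forall ?_)
      intro t htmem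
      have ht0 : (0:ℝ) ≤ t := htmem.1
      have ha0 := Real.arccos_nonneg (c t)
      rw [hhdef]
      exact mul_nonneg (by positivity) (div_nonneg ha0 hπ.le)
    · exact hhm.aestronglyMeasurable
  rw [hPev, h1, ← h2, integral_Icc_eq_integral_Ioc]
  set L := |α - d| with hLdef
  set U := min rmax (d + α) with hUdef
  set m := max (α - d) 0 with hmdef
  have hL0 : 0 ≤ L := abs_nonneg _
  have hm0 : 0 ≤ m := le_max_right _ _
  have hmL : m ≤ L := by
    rcases le_total (α - d) 0 with hh | hh
    · rw [hmdef, max_eq_right hh]; exact hL0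
    · rw [hmdef, max_eq_left hh, hLdef, abs_of_nonneg hh]
  have hmrmax : m ≤ rmax := max_le hαd hrmax.le
  have hUrmax : U ≤ rmax := min_le_left _ _
  set g' : ℝ → ℝ :=
    fun t => 2 * t / (Real.pi * rmax ^ 2) * Real.arccos (c t) with hg'def
  have hg'm : Measurable g' := by
    rw [hg'def]; exact Measurable.mul (by fun_prop) harcm
  have hkey : ∀ t ∈ Set.Ioc (0:ℝ) rmax, h t =
      Set.indicator (Set.Ioc L U) g' t
        + Set.indicator (Set.Ioc 0 m) (fun t => 2 * t / rmax ^ 2) t := by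
    rintro t ⟨ht0, htr⟩
    by_cases hin : t ∈ Set.Ioc L U
    · rw [Set.indicator_of_mem hin, Set.indicator_of_notMem, hhdef, hg'def]
      · simp only
        ring
      · rintro ⟨hh1, hh2⟩
        exact absurd (hh2.trans hmL) (not_le.2 hin.1)
    · by_cases hin2 : t ∈ Set.Ioc 0 m
      · -- then α > d, t ≤ α - d, arccos = π
        have hmpos : 0 < m := lt_of_lt_of_le hin2.1 hin2.2
        have hαd' : 0 < α - d := by
          by_contra hcon
          push_neg at hcon
          rw [hmdef, max_eq_right hcon] at hmpos
          exact lt_irrefl 0 hmpos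
        have htm : t ≤ α - d := by
          have := hin2.2
          rwa [hmdef, max_eq_left hαd'.le] at this
        have hcle : c t ≤ -1 := by
          rw [hcdef]
          simp only
          rw [div_le_iff₀ (by positivity)]
          nlinarith
        rw [Set.indicator_of_notMem hin, Set.indicator_of_mem hin2, hhdef]
        simp only
        rw [Real.arccos_eq_pi.2 hcle, div_self (ne_of_gt hπ), mul_one]
        simp
      · -- arccos = 0
        have htm : m < t := by
          rcases lt_or_ge m t with hh | hh
          · exact hh
          · exact absurd ⟨ht0, hh⟩ hin2
        have hc1 : 1 ≤ c t := by
          rw [hcdef]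
          simp only
          rw [le_div_iff₀ (by positivity)]
          rw [Set.mem_Ioc, not_and_or, not_lt, not_le] at hin
          have htm' : α - d < t := lt_of_le_of_lt (le_max_left _ _) htm
          rcases hin with hin | hin
          · -- t ≤ L, so α < d and t ≤ d - α
            have hαlt : α - d < 0 := by
              by_contra hcon
              push_neg at hcon
              rw [hLdef, abs_of_nonneg hcon] at hin
              exact absurd htm' (not_lt.2 hin)
            have htL : t ≤ d - α := by
              rw [hLdef, abs_of_neg hαlt] at hin
              linarith
            nlinarith
          · -- U < t, so d + α < t
            have hUda : U = d + α ∨ U = rmax := by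
              rcases min_cases rmax (d + α) with ⟨hh, -⟩ | ⟨hh, -⟩
              · right; rw [hUdef]; exact hh
              · left; rw [hUdef]; exact hh
            rcases hUda with hh | hh
            · rw [hh] at hin
              nlinarith
            · rw [hh] at hin
              exact absurd htr (not_le.2 hin)
        rw [Set.indicator_of_notMem hin, Set.indicator_of_notMem hin2, hhdef]
        simp only
        rw [Real.arccos_eq_zero.2 hc1]
        simp
  rw [setIntegral_congr_fun measurableSet_Ioc hkey]
  haveI : IsFiniteMeasure (volume.restrict (Set.Ioc (0:ℝ) rmax)) :=
    ⟨by rw [Measure.restrict_apply_univ]; exact measure_Ioc_lt_top⟩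
  have hint1 : Integrable (Set.indicator (Set.Ioc L U) g')
      (volume.restrict (Set.Ioc 0 rmax)) := by
    apply Integrable.mono' (integrable_const (2 * rmax / (Real.pi * rmax ^ 2) * Real.pi))
      ((hg'm.indicator measurableSet_Ioc).aestronglyMeasurable)
    refine Filter.Eventually.of_forall fun t => ?_
    rw [Real.norm_eq_abs]
    by_cases hmem : t ∈ Set.Ioc L U
    · rw [Set.indicator_of_mem hmem, hg'def]
      simp only
      have h1 : 0 < t := lt_of_le_of_lt hL0 hmem.1
      have h2 : t ≤ rmax := hmem.2.trans hUrmax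
      have ha0 := Real.arccos_nonneg (c t)
      have haπ := Real.arccos_le_pi (c t)
      rw [abs_of_nonneg (by positivity)]
      have hb : 2 * t / (Real.pi * rmax ^ 2) ≤ 2 * rmax / (Real.pi * rmax ^ 2) := by
        gcongr
      exact mul_le_mul hb haπ ha0 (by positivity)
    · rw [Set.indicator_of_notMem hmem]
      simp only [norm_zero, abs_zero]
      positivity
  have hint2 : Integrable (Set.indicator (Set.Ioc 0 m) (fun t => 2 * t / rmax ^ 2))
      (volume.restrict (Set.Ioc 0 rmax)) := by
    have hmeas2 : Measurable (fun t : ℝ => 2 * t / rmax ^ 2) := by fun_prop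
    apply Integrable.mono' (integrable_const (2 * rmax / rmax ^ 2))
      ((hmeas2.indicator measurableSet_Ioc).aestronglyMeasurable)
    refine Filter.Eventually.of_forall fun t => ?_
    rw [Real.norm_eq_abs]
    by_cases hmem : t ∈ Set.Ioc 0 m
    · rw [Set.indicator_of_mem hmem]
      have h1 : 0 < t := hmem.1
      have h2 : t ≤ rmax := hmem.2.trans hmrmax
      rw [abs_of_nonneg (by positivity)]
      gcongr
    · rw [Set.indicator_of_notMem hmem]
      simp only [abs_zero]
      positivity
  rw [integral_add hint1 hint2, setIntegral_indicator measurableSet_Ioc,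
    setIntegral_indicator measurableSet_Ioc]
  have e1 : Set.Ioc (0:ℝ) rmax ∩ Set.Ioc L U = Set.Ioc L U :=
    Set.inter_eq_self_of_subset_right
      (fun x hx => ⟨lt_of_le_of_lt hL0 hx.1, hx.2.trans hUrmax⟩)
  have e2 : Set.Ioc (0:ℝ) rmax ∩ Set.Ioc 0 m = Set.Ioc 0 m :=
    Set.inter_eq_self_of_subset_right (fun x hx => ⟨hx.1, hx.2.trans hmrmax⟩)
  rw [e1, e2]
  have hatom : ∫ t in Set.Ioc 0 m, 2 * t / rmax ^ 2 = m ^ 2 / rmax ^ 2 := by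
    rw [← intervalIntegral.integral_of_le hm0]
    have hrw : (fun t : ℝ => 2 * t / rmax ^ 2) = fun t : ℝ => (2 / rmax ^ 2) * t := by
      funext t; ring
    simp only [hrw]
    rw [intervalIntegral.integral_const_mul, integral_id]
    ring
  rw [hatom]
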